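/- (Block p-RIP implies weighted block p-NSP) Let 0 < p ≤ 1, ω ∈ [0,1], k, s positive integers, a > 1 an integer with ak ≥ s − k when s > k. Suppose A ∈ ℝ^{m×N} (block structure with blocks of size d) has block p-restricted isometry constants satisfying δ_{ak} + (a^{1−p/2}/γ) δ_{(a+1)k} < a^{1−p/2}/γ − 1, where γ = ω + (1−ω)(s/k)^{1−p/2}. Then A satisfies the weighted block p-null space property with parameters k, s and constant C = a^{p/2−1} γ (1+δ_{ak}) / (1−δ_{(a+1)k}) < 1; that is, for all h with Ah = 0 and all block sets T, S with |T| ≤ k, |S| ≤ s: ω‖h_T‖_{2,p}^p + (1−ω)‖h_S‖_{2,p}^p ≤ C‖h_{T^c}‖_{2,p}^p. -/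

import Mathlib

open Finset

private lemma rpow_add_le_aux (x y : ℝ) (hx : 0 ≤ x) (hy : 0 ≤ y) {p : ℝ}
    (hp0 : 0 ≤ p) (hp1 : p ≤ 1) : (x + y) ^ p ≤ x ^ p + y ^ p := by
  lift x to NNReal using hx
  lift y to NNReal using hy
  exact_mod_cast NNReal.rpow_add_le_add_rpow x y hp0 hp1

private lemma abs_sum_rpow_le_aux {ι : Type*} (J : Finset ι) (x : ι → ℝ) {p : ℝ}
    (hp : 0 < p) (hp1 : p ≤ 1) :
    |∑ j ∈ J, x j| ^ p ≤ ∑ j ∈ J, |x j| ^ p := by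
  classical
  induction J using Finset.induction with
  | empty => simp [Real.zero_rpow hp.ne']
  | @insert b s' hj ih =>
    rw [Finset.sum_insert hj, Finset.sum_insert hj]
    calc |x b + ∑ j ∈ s', x j| ^ p ≤ (|x b| + |∑ j ∈ s', x j|) ^ p :=
          Real.rpow_le_rpow (abs_nonneg _) (abs_add_le _ _) hp.le
      _ ≤ |x b| ^ p + |∑ j ∈ s', x j| ^ p :=
          rpow_add_le_aux _ _ (abs_nonneg _) (abs_nonneg _) hp.le hp1
      _ ≤ |x b| ^ p + ∑ j ∈ s', |x j| ^ p := by linarith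

private lemma sum_rpow_le_card_mul_aux {ι : Type*} (F : Finset ι) (a : ι → ℝ)
    (ha : ∀ i, 0 ≤ a i) {p : ℝ} (hp : 0 < p) (hp1 : p ≤ 1) :
    ∑ i ∈ F, a i ^ p ≤ (F.card : ℝ) ^ (1 - p / 2) * (∑ i ∈ F, a i ^ (2:ℝ)) ^ (p / 2) := by
  have h2p : (1:ℝ) ≤ 2 / p := by rw [le_div_iff₀ hp]; linarith
  have key := Real.inner_le_weight_mul_Lp_of_nonneg F h2p (fun _ => 1) (fun i => a i ^ p)
    (fun _ => zero_le_one) (fun i => Real.rpow_nonneg (ha i) p)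
  simp only [one_mul, Finset.sum_const, nsmul_eq_mul, mul_one] at key
  have hinv : (2 / p)⁻¹ = p / 2 := by field_simp
  have hrw : ∀ i ∈ F, (a i ^ p) ^ (2/p) = a i ^ (2:ℝ) := by
    intro i _
    rw [← Real.rpow_mul (ha i)]
    congr 1
    field_simp
  rw [hinv, Finset.sum_congr rfl hrw] at key
  exact key

private lemma cardG_aux {n : ℕ} (e : Equiv.Perm (Fin n)) (t : ℕ) :
    (univ.filter (fun i => ((e i : ℕ) < t))).card = min t n := by
  classical
  rw [show min t n = (Finset.range (min t n)).card from (Finset.card_range _).symm]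
  apply Finset.card_bij (fun i _ => (e i : ℕ))
  · intro i hi
    simp only [mem_filter, mem_univ, true_and] at hi
    simp only [Finset.mem_range, lt_min_iff]
    exact ⟨hi, (e i).isLt⟩
  · intro i hi j hj hij
    exact e.injective (Fin.val_injective hij)
  · intro x hx
    simp only [Finset.mem_range, lt_min_iff] at hx
    refine ⟨e.symm ⟨x, hx.2⟩, ?_, by simp⟩
    simp [hx.1]

private lemma topt_aux {n : ℕ} (f : Fin n → ℝ) (hf : ∀ i, 0 ≤ f i) (e : Equiv.Perm (Fin n))
    (hr : ∀ i i' : Fin n, (e i : ℕ) ≤ (e i' : ℕ) → f i' ≤ f i) (t : ℕ) (W : Finset (Fin n))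
    (hW : W.card ≤ t) :
    ∑ i ∈ W, f i ≤ ∑ i ∈ univ.filter (fun i => ((e i : ℕ) < t)), f i := by
  classical
  set G := univ.filter (fun i => ((e i : ℕ) < t)) with hG
  have hsplitW : ∑ i ∈ W, f i = ∑ i ∈ W ∩ G, f i + ∑ i ∈ W \ G, f i := by
    rw [Finset.sum_inter_add_sum_sdiff]
  have hsplitG : ∑ i ∈ G, f i = ∑ i ∈ W ∩ G, f i + ∑ i ∈ G \ W, f i := by
    rw [Finset.inter_comm, Finset.sum_inter_add_sum_sdiff]
  rw [hsplitW, hsplitG]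
  have hkey : ∑ i ∈ W \ G, f i ≤ ∑ i ∈ G \ W, f i := by
    rcases Finset.eq_empty_or_nonempty (W \ G) with he | hne
    · rw [he, Finset.sum_empty]
      exact Finset.sum_nonneg fun i _ => hf i
    · have hcardle : (W \ G).card ≤ (G \ W).card := by
        have h1 : (W ∩ G).card + (W \ G).card = W.card := by
          rw [Finset.card_inter_add_card_sdiff]
        have h2 : (W ∩ G).card + (G \ W).card = G.card := by
          rw [Finset.inter_comm, Finset.card_inter_add_card_sdiff]
        have hGc : G.card = min t n := cardG_aux e t
        rcases le_or_gt t n with hc | hc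
        · omega
        · have huniv : G = univ := by
            ext i; simp only [hG, mem_filter, mem_univ, true_and, iff_true]
            exact lt_of_lt_of_le (e i).isLt hc.le
          rw [huniv, Finset.sdiff_eq_empty_iff_subset.mpr (Finset.subset_univ W)] at hne
          exact absurd rfl (Finset.nonempty_iff_ne_empty.mp hne)
      have hGWne : (G \ W).Nonempty := by
        rw [← Finset.card_pos]
        calc 0 < (W \ G).card := Finset.card_pos.mpr hne
          _ ≤ (G \ W).card := hcardle
      obtain ⟨i0, hi0, hmin⟩ := Finset.exists_min_image (G \ W) f hGWne
      have hle1 : ∀ i ∈ W \ G, f i ≤ f i0 := by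
        intro i hi
        apply hr
        have h1 : (e i0 : ℕ) < t := by
          have := (Finset.mem_sdiff.mp hi0).1
          simpa [hG] using this
        have h2 : ¬ ((e i : ℕ) < t) := by
          have := (Finset.mem_sdiff.mp hi).2
          simpa [hG] using this
        omega
      calc ∑ i ∈ W \ G, f i ≤ (W \ G).card • f i0 := Finset.sum_le_card_nsmul _ _ _ hle1
        _ ≤ (G \ W).card • f i0 := nsmul_le_nsmul_left (hf i0) hcardle
        _ ≤ ∑ i ∈ G \ W, f i := Finset.card_nsmul_le_sum _ _ _ hmin
  linarith

set_option maxHeartbeats 1200000 in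
theorem block_pRIP_implies_weighted_block_pNSP (n d m k s a : ℕ) (p ω δak δa1k γ : ℝ)
    (hp : 0 < p) (hp1 : p ≤ 1) (hω0 : 0 ≤ ω) (hω1 : ω ≤ 1)
    (hk : 0 < k) (hs : 0 < s) (ha : 1 < a)
    (has : k < s → s - k ≤ a * k)
    (hγ : γ = ω + (1 - ω) * ((s : ℝ) / (k : ℝ)) ^ (1 - p / 2))
    (hδak : 0 ≤ δak) (hδa1k : 0 ≤ δa1k)
    (A : (Fin n → EuclideanSpace ℝ (Fin d)) →ₗ[ℝ] EuclideanSpace ℝ (Fin m))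
    (hRIPu : ∀ v : Fin n → EuclideanSpace ℝ (Fin d),
      (∃ T : Finset (Fin n), T.card ≤ a * k ∧ ∀ i ∉ T, v i = 0) →
      ∑ i, |A v i| ^ p ≤ (1 + δak) * Real.sqrt (∑ i, ‖v i‖ ^ 2) ^ p)
    (hRIPl : ∀ v : Fin n → EuclideanSpace ℝ (Fin d),
      (∃ T : Finset (Fin n), T.card ≤ (a + 1) * k ∧ ∀ i ∉ T, v i = 0) →
      (1 - δa1k) * Real.sqrt (∑ i, ‖v i‖ ^ 2) ^ p ≤ ∑ i, |A v i| ^ p)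
    (hcond : δak + (a : ℝ) ^ (1 - p / 2) / γ * δa1k < (a : ℝ) ^ (1 - p / 2) / γ - 1) :
    (a : ℝ) ^ (p / 2 - 1) * γ * (1 + δak) / (1 - δa1k) < 1 ∧
    ∀ h : Fin n → EuclideanSpace ℝ (Fin d), A h = 0 →
      ∀ T S : Finset (Fin n), T.card ≤ k → S.card ≤ s →
        ω * ∑ i ∈ T, ‖h i‖ ^ p + (1 - ω) * ∑ i ∈ S, ‖h i‖ ^ p ≤
          ((a : ℝ) ^ (p / 2 - 1) * γ * (1 + δak) / (1 - δa1k)) * ∑ i ∈ Tᶜ, ‖h i‖ ^ p := by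
  classical
  -- ## Part 1 : the constant is < 1
  have hapos : (0:ℝ) < a := by exact_mod_cast Nat.lt_of_lt_of_le Nat.zero_lt_one ha.le
  have hkpos : (0:ℝ) < k := by exact_mod_cast hk
  have hspos : (0:ℝ) < s := by exact_mod_cast hs
  have hq : (0:ℝ) < ((s : ℝ) / (k : ℝ)) ^ (1 - p / 2) :=
    Real.rpow_pos_of_pos (div_pos hspos hkpos) _
  have hγpos : 0 < γ := by
    rcases eq_or_lt_of_le hω1 with hw | hw
    · rw [hγ, hw]; norm_num
    · have := mul_pos (sub_pos.2 hw) hq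
      rw [hγ]; linarith
  set t := (a : ℝ) ^ (1 - p / 2) with hts
  have ht : 0 < t := Real.rpow_pos_of_pos hapos _
  have htγ : 0 < t / γ := div_pos ht hγpos
  have h1 : 1 + δak < t / γ * (1 - δa1k) := by nlinarith
  have hδ1 : 0 < 1 - δa1k := by nlinarith
  have hti : (a:ℝ) ^ (p/2 - 1) = t⁻¹ := by
    rw [show p/2 - 1 = -(1 - p/2) by ring, Real.rpow_neg hapos.le]
  have hCpos : 0 < (a : ℝ) ^ (p / 2 - 1) * γ * (1 + δak) / (1 - δa1k) := by
    apply div_pos _ hδ1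
    apply mul_pos (mul_pos _ hγpos) (by linarith)
    exact Real.rpow_pos_of_pos hapos _
  have hC : (a : ℝ) ^ (p / 2 - 1) * γ * (1 + δak) / (1 - δa1k) < 1 := by
    rw [div_lt_one hδ1, hti]
    have h2 : γ * (1 + δak) < t * (1 - δa1k) := by
      have h3 := (mul_lt_mul_of_pos_left h1 hγpos)
      rw [show γ * (t / γ * (1 - δa1k)) = t * (1 - δa1k) by field_simp] at h3
      linarith
    rw [inv_mul_eq_div, div_mul_eq_mul_div, div_lt_iff₀ ht]
    nlinarith
  refine ⟨hC, ?_⟩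
  -- ## Part 2 : the null space property
  intro h hker T S hT hS
  set e := (Tuple.sort (fun i => -‖h i‖)).symm with he
  have hrank : ∀ i i' : Fin n, (e i : ℕ) ≤ (e i' : ℕ) → ‖h i'‖ ≤ ‖h i‖ := by
    intro i i' hle
    have h2 := Tuple.monotone_sort (fun i => -‖h i‖)
      (a := e i) (b := e i') (by exact hle)
    simp only [Function.comp_apply, he, Equiv.apply_symm_apply] at h2
    linarith
  have hrankp : ∀ i i' : Fin n, (e i : ℕ) ≤ (e i' : ℕ) → ‖h i'‖ ^ p ≤ ‖h i‖ ^ p := by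
    intro i i' hle
    exact Real.rpow_le_rpow (norm_nonneg _) (hrank i i' hle) hp.le
  have hnn : ∀ i, (0:ℝ) ≤ ‖h i‖ ^ p := fun i => Real.rpow_nonneg (norm_nonneg _) _
  -- cumulative top sets
  set G : ℕ → Finset (Fin n) := fun t => univ.filter (fun i => ((e i : ℕ) < t)) with hGdef
  have hGmono : ∀ {t t' : ℕ}, t ≤ t' → G t ⊆ G t' := by
    intro t t' htt i hi
    simp only [hGdef, mem_filter, mem_univ, true_and] at hi ⊢
    omega
  have hGcard : ∀ t, (G t).card = min t n := fun t => cardG_aux e t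
  have hak : 0 < a * k := Nat.mul_pos (Nat.lt_of_lt_of_le Nat.zero_lt_one ha.le) hk
  have hakR : (0:ℝ) < (a*k : ℕ) := by exact_mod_cast hak
  -- block lengths
  set u : ℕ → ℕ := fun j => k + j * (a * k) with hu
  have hustep : ∀ j, u (j+1) = u j + a * k := by
    intro j; simp only [hu]; ring
  have hu0 : u 0 = k := by simp [hu]
  have hu1 : u 1 = k + a * k := by simp [hu]
  have humono : Monotone u := by
    intro j j' hj
    simp only [hu]
    exact Nat.add_le_add_left (Nat.mul_le_mul_right _ hj) k
  -- restriction operator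
  set P : Finset (Fin n) → (Fin n → EuclideanSpace ℝ (Fin d)) :=
    fun F i => if i ∈ F then h i else 0 with hP
  have hPsupp : ∀ F : Finset (Fin n), ∀ i ∉ F, P F i = 0 := by
    intro F i hi; simp [hP, hi]
  have hPsum2 : ∀ F : Finset (Fin n), ∑ i, ‖P F i‖ ^ 2 = ∑ i ∈ F, ‖h i‖ ^ 2 := by
    intro F
    have hptw : ∀ i, ‖P F i‖ ^ 2 = if i ∈ F then ‖h i‖ ^ 2 else 0 := by
      intro i; by_cases hi : i ∈ F <;> simp [hP, hi]
    rw [Finset.sum_congr rfl (fun i _ => hptw i), Finset.sum_ite_mem, Finset.univ_inter]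
  -- windows and chunks
  set W : ℕ → Finset (Fin n) := fun j => G (u (j+1)) \ G (u j) with hW
  set D : ℕ → Finset (Fin n) := fun j => G (u (j+2)) \ G (u (j+1)) with hD
  have hDcard : ∀ j, (D j).card ≤ a * k := by
    intro j
    have hsub : G (u (j+1)) ⊆ G (u (j+2)) := hGmono (humono (by omega))
    simp only [hD]
    rw [Finset.card_sdiff_of_subset hsub, hGcard, hGcard, hustep (j+1)]
    omega
  -- decomposition of h
  have hdecomp : h - P (G (u 1)) = ∑ j ∈ Finset.range n, P (D j) := by
    have htel := Finset.sum_range_sub (fun j => P (G (u (j+1)))) n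
    have hDj : ∀ j, P (D j) = P (G (u (j+2))) - P (G (u (j+1))) := by
      intro j
      funext i
      by_cases h1 : i ∈ G (u (j+1))
      · have h2 : i ∈ G (u (j+2)) := hGmono (humono (by omega)) h1
        have h3 : i ∉ D j := by simp [hD, Finset.mem_sdiff, h1]
        simp [hP, h1, h2, h3]
      · by_cases h2 : i ∈ G (u (j+2))
        · have h3 : i ∈ D j := by simp [hD, Finset.mem_sdiff, h1, h2]
          simp [hP, h1, h2, h3]
        · have h3 : i ∉ D j := by simp [hD, Finset.mem_sdiff, h1, h2]
          simp [hP, h1, h2, h3]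
    rw [Finset.sum_congr rfl (fun j _ => hDj j), htel]
    have hGn : G (u (n+1)) = univ := by
      ext i
      simp only [hGdef, mem_filter, mem_univ, true_and, iff_true]
      have h1 : (e i : ℕ) < n := (e i).isLt
      have h2 : n + 1 ≤ u (n+1) := by
        simp only [hu]
        calc n + 1 ≤ (n+1) * (a*k) := Nat.le_mul_of_pos_right _ hak
          _ ≤ k + (n+1) * (a*k) := Nat.le_add_left _ _
      omega
    rw [hGn]
    congr 1
    funext i
    simp [hP]
  -- kernel identity, coordinatewise
  have hker2 : ∀ i : Fin m, A (P (G (u 1))) i = - ∑ j ∈ Finset.range n, A (P (D j)) i := by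
    have h1 : A (P (G (u 1))) = - ∑ j ∈ Finset.range n, A (P (D j)) := by
      have h2 : A (h - P (G (u 1))) = A (∑ j ∈ Finset.range n, P (D j)) := by rw [hdecomp]
      rw [map_sub, hker, map_sum, zero_sub] at h2
      rw [← neg_neg (A (P (G (u 1)))), h2]
    intro i
    rw [h1]
    have hsa : (∑ j ∈ Finset.range n, A (P (D j))) i = ∑ j ∈ Finset.range n, A (P (D j)) i :=
      by rw [WithLp.ofLp_sum, Finset.sum_apply]
    have hna : (-(∑ j ∈ Finset.range n, A (P (D j)))) i = -((∑ j ∈ Finset.range n, A (P (D j))) i) := rfl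
    rw [hna, hsa]
  have hkey1 : ∑ i, |A (P (G (u 1))) i| ^ p ≤
      ∑ j ∈ Finset.range n, ∑ i, |A (P (D j)) i| ^ p := by
    rw [Finset.sum_comm]
    apply Finset.sum_le_sum
    intro i _
    rw [hker2 i, abs_neg]
    exact abs_sum_rpow_le_aux _ _ hp hp1
  -- RIP applications
  have hup : ∀ j ∈ Finset.range n, ∑ i, |A (P (D j)) i| ^ p ≤
      (1 + δak) * Real.sqrt (∑ i ∈ D j, ‖h i‖ ^ 2) ^ p := by
    intro j _
    have hres := hRIPu (P (D j)) ⟨D j, hDcard j, hPsupp _⟩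
    rwa [hPsum2] at hres
  have hlowcard : (G (u 1)).card ≤ (a + 1) * k := by
    rw [hGcard, hu1]
    have h2 : (a+1) * k = a*k + k := by ring
    omega
  have hlow : (1 - δa1k) * Real.sqrt (∑ i ∈ G (u 1), ‖h i‖ ^ 2) ^ p ≤
      ∑ i, |A (P (G (u 1))) i| ^ p := by
    have hres := hRIPl (P (G (u 1))) ⟨G (u 1), hlowcard, hPsupp _⟩
    rwa [hPsum2] at hres
  -- averaging bound for each chunk
  have havg : ∀ j ∈ Finset.range n, Real.sqrt (∑ i ∈ D j, ‖h i‖ ^ 2) ^ p ≤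
      ((a*k : ℕ) : ℝ) ^ (p/2 - 1) * ∑ i ∈ W j, ‖h i‖ ^ p := by
    intro j _
    rcases Finset.eq_empty_or_nonempty (D j) with hDe | hDne
    · rw [hDe, Finset.sum_empty, Real.sqrt_zero, Real.zero_rpow hp.ne']
      exact mul_nonneg (Real.rpow_nonneg hakR.le _) (Finset.sum_nonneg fun i _ => hnn i)
    · obtain ⟨i0, hi0⟩ := hDne
      have hi0rank : u (j+1) ≤ (e i0 : ℕ) := by
        have := (Finset.mem_sdiff.mp hi0).2
        simp only [hGdef, mem_filter, mem_univ, true_and] at this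
        omega
      have hWcard : (W j).card = a * k := by
        have hsub : G (u j) ⊆ G (u (j+1)) := hGmono (humono (by omega))
        simp only [hW]
        rw [Finset.card_sdiff_of_subset hsub, hGcard, hGcard, hustep j]
        have h2 : (e i0 : ℕ) < n := (e i0).isLt
        rw [hustep j] at hi0rank
        omega
      set μ := (∑ i ∈ W j, ‖h i‖ ^ p) / ((a*k : ℕ) : ℝ) with hμ
      have hWnn : (0:ℝ) ≤ ∑ i ∈ W j, ‖h i‖ ^ p := Finset.sum_nonneg fun i _ => hnn i
      have hμ0 : 0 ≤ μ := div_nonneg hWnn hakR.le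
      have hbound : ∀ i ∈ D j, ‖h i‖ ^ p ≤ μ := by
        intro i hi
        have hcmp : ∀ i' ∈ W j, ‖h i‖ ^ p ≤ ‖h i'‖ ^ p := by
          intro i' hi'
          apply hrankp
          have hA : (e i' : ℕ) < u (j+1) := by
            have := (Finset.mem_sdiff.mp hi').1
            simp only [hGdef, mem_filter, mem_univ, true_and] at this
            exact this
          have hB : u (j+1) ≤ (e i : ℕ) := by
            have := (Finset.mem_sdiff.mp hi).2
            simp only [hGdef, mem_filter, mem_univ, true_and] at this
            omega
          omega
        have hcn := Finset.card_nsmul_le_sum (W j) (fun i' => ‖h i'‖ ^ p) (‖h i‖ ^ p) hcmp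
        rw [hWcard, nsmul_eq_mul] at hcn
        rw [hμ, le_div_iff₀ hakR]
        calc ‖h i‖ ^ p * ((a*k : ℕ) : ℝ) = ((a*k : ℕ) : ℝ) * ‖h i‖ ^ p := by ring
          _ ≤ ∑ i' ∈ W j, ‖h i'‖ ^ p := hcn
      have hsum2 : ∑ i ∈ D j, ‖h i‖ ^ 2 ≤ ((a*k : ℕ) : ℝ) * μ ^ ((2:ℝ)/p) := by
        have hterm : ∀ i ∈ D j, ‖h i‖ ^ 2 ≤ μ ^ ((2:ℝ)/p) := by
          intro i hi
          have h1 : (‖h i‖ : ℝ) ^ 2 = (‖h i‖ ^ p) ^ ((2:ℝ)/p) := by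
            rw [← Real.rpow_mul (norm_nonneg _), show p * ((2:ℝ)/p) = ((2:ℕ):ℝ) by
              push_cast; field_simp, Real.rpow_natCast]
          rw [h1]
          exact Real.rpow_le_rpow (hnn i) (hbound i hi) (by positivity)
        calc ∑ i ∈ D j, ‖h i‖ ^ 2 ≤ ∑ _i ∈ D j, μ ^ ((2:ℝ)/p) := Finset.sum_le_sum hterm
          _ = ((D j).card : ℝ) * μ ^ ((2:ℝ)/p) := by rw [Finset.sum_const, nsmul_eq_mul]
          _ ≤ ((a*k : ℕ) : ℝ) * μ ^ ((2:ℝ)/p) := by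
              apply mul_le_mul_of_nonneg_right _ (Real.rpow_nonneg hμ0 _)
              exact_mod_cast hDcard j
      have hs2nn : (0:ℝ) ≤ ∑ i ∈ D j, ‖h i‖ ^ 2 :=
        Finset.sum_nonneg fun i _ => sq_nonneg _
      calc Real.sqrt (∑ i ∈ D j, ‖h i‖ ^ 2) ^ p
          = (∑ i ∈ D j, ‖h i‖ ^ 2) ^ (p/2) := by
            rw [Real.sqrt_eq_rpow, ← Real.rpow_mul hs2nn]
            congr 1; ring
        _ ≤ (((a*k : ℕ) : ℝ) * μ ^ ((2:ℝ)/p)) ^ (p/2) := by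
            apply Real.rpow_le_rpow hs2nn hsum2 (by positivity)
        _ = ((a*k : ℕ) : ℝ) ^ (p/2) * μ := by
            rw [Real.mul_rpow hakR.le (Real.rpow_nonneg hμ0 _),
              ← Real.rpow_mul hμ0, show (2:ℝ)/p * (p/2) = 1 by field_simp, Real.rpow_one]
        _ = ((a*k : ℕ) : ℝ) ^ (p/2 - 1) * ∑ i ∈ W j, ‖h i‖ ^ p := by
            rw [hμ, Real.rpow_sub hakR, Real.rpow_one]
            field_simp
  -- telescoping window sums
  have hwin : ∑ j ∈ Finset.range n, ∑ i ∈ W j, ‖h i‖ ^ p ≤ ∑ i ∈ (G k)ᶜ, ‖h i‖ ^ p := by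
    have hWj : ∀ j, ∑ i ∈ W j, ‖h i‖ ^ p =
        (∑ i ∈ G (u (j+1)), ‖h i‖ ^ p) - ∑ i ∈ G (u j), ‖h i‖ ^ p := by
      intro j
      simp only [hW]
      rw [Finset.sum_sdiff_eq_sub (hGmono (humono (by omega)))]
    rw [Finset.sum_congr rfl (fun j _ => hWj j),
      Finset.sum_range_sub (fun j => ∑ i ∈ G (u j), ‖h i‖ ^ p)]
    rw [← Finset.sum_sdiff_eq_sub (hGmono (humono (Nat.zero_le n)))]
    apply Finset.sum_le_sum_of_subset_of_nonneg
    · intro i hi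
      rw [Finset.mem_compl]
      have := (Finset.mem_sdiff.mp hi).2
      rw [hu0] at this
      exact this
    · intro i _ _
      exact hnn i
  -- assemble the RIP chain
  have hstar : (1 - δa1k) * Real.sqrt (∑ i ∈ G (u 1), ‖h i‖ ^ 2) ^ p ≤
      (1 + δak) * (((a*k : ℕ) : ℝ) ^ (p/2 - 1) * ∑ i ∈ (G k)ᶜ, ‖h i‖ ^ p) := by
    calc (1 - δa1k) * Real.sqrt (∑ i ∈ G (u 1), ‖h i‖ ^ 2) ^ p
        ≤ ∑ i, |A (P (G (u 1))) i| ^ p := hlow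
      _ ≤ ∑ j ∈ Finset.range n, ∑ i, |A (P (D j)) i| ^ p := hkey1
      _ ≤ ∑ j ∈ Finset.range n, (1 + δak) * Real.sqrt (∑ i ∈ D j, ‖h i‖ ^ 2) ^ p :=
          Finset.sum_le_sum hup
      _ ≤ ∑ j ∈ Finset.range n, (1 + δak) *
            (((a*k : ℕ) : ℝ) ^ (p/2 - 1) * ∑ i ∈ W j, ‖h i‖ ^ p) := by
          apply Finset.sum_le_sum
          intro j hj
          exact mul_le_mul_of_nonneg_left (havg j hj) (by linarith)
      _ = (1 + δak) * (((a*k : ℕ) : ℝ) ^ (p/2 - 1) *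
            ∑ j ∈ Finset.range n, ∑ i ∈ W j, ‖h i‖ ^ p) := by
          rw [← Finset.mul_sum, ← Finset.mul_sum]
      _ ≤ (1 + δak) * (((a*k : ℕ) : ℝ) ^ (p/2 - 1) * ∑ i ∈ (G k)ᶜ, ‖h i‖ ^ p) := by
          apply mul_le_mul_of_nonneg_left _ (by linarith)
          exact mul_le_mul_of_nonneg_left hwin (Real.rpow_nonneg hakR.le _)
  -- bound the two weighted terms
  set R := Real.sqrt (∑ i ∈ G (u 1), ‖h i‖ ^ 2) ^ p with hR
  have hRnn : 0 ≤ R := Real.rpow_nonneg (Real.sqrt_nonneg _) _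
  have hRrpow : R = (∑ i ∈ G (u 1), ‖h i‖ ^ 2) ^ (p/2) := by
    rw [hR, Real.sqrt_eq_rpow, ← Real.rpow_mul (Finset.sum_nonneg fun i _ => sq_nonneg _)]
    congr 1; ring
  have hsum2cast : ∀ F : Finset (Fin n), ∑ i ∈ F, (‖h i‖ : ℝ) ^ (2:ℝ) = ∑ i ∈ F, ‖h i‖ ^ 2 := by
    intro F
    apply Finset.sum_congr rfl
    intro i _
    rw [show (2:ℝ) = ((2:ℕ):ℝ) by norm_num, Real.rpow_natCast]
  have hGsub : ∀ {w : ℕ}, w ≤ u 1 → ∑ i ∈ G w, ‖h i‖ ^ 2 ≤ ∑ i ∈ G (u 1), ‖h i‖ ^ 2 := by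
    intro w hw
    exact Finset.sum_le_sum_of_subset_of_nonneg (hGmono hw) (fun i _ _ => sq_nonneg _)
  have hcardbound : ∀ (w : ℕ), 0 < w → w ≤ u 1 →
      ∑ i ∈ G w, ‖h i‖ ^ p ≤ ((w:ℝ)) ^ (1 - p/2) * R := by
    intro w hw0 hw
    have h1 := sum_rpow_le_card_mul_aux (G w) (fun i => ‖h i‖) (fun i => norm_nonneg _) hp hp1
    rw [hsum2cast] at h1
    calc ∑ i ∈ G w, ‖h i‖ ^ p
        ≤ ((G w).card : ℝ) ^ (1 - p/2) * (∑ i ∈ G w, ‖h i‖ ^ 2) ^ (p/2) := h1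
      _ ≤ ((w:ℝ)) ^ (1 - p/2) * (∑ i ∈ G (u 1), ‖h i‖ ^ 2) ^ (p/2) := by
          apply mul_le_mul
          · apply Real.rpow_le_rpow (Nat.cast_nonneg _) _ (by linarith)
            exact_mod_cast (by rw [hGcard]; omega : (G w).card ≤ w)
          · exact Real.rpow_le_rpow (Finset.sum_nonneg fun i _ => sq_nonneg _)
              (hGsub hw) (by positivity)
          · positivity
          · positivity
      _ = ((w:ℝ)) ^ (1 - p/2) * R := by rw [hRrpow]
  have hsk : s ≤ u 1 := by
    rw [hu1]
    rcases le_or_gt s k with hc | hc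
    · omega
    · have := has hc; omega
  have hkk : k ≤ u 1 := by rw [hu1]; omega
  have hTtop : ∑ i ∈ T, ‖h i‖ ^ p ≤ ∑ i ∈ G k, ‖h i‖ ^ p :=
    topt_aux _ hnn e hrankp k T hT
  have hStop : ∑ i ∈ S, ‖h i‖ ^ p ≤ ∑ i ∈ G s, ‖h i‖ ^ p :=
    topt_aux _ hnn e hrankp s S hS
  have hLHS : ω * ∑ i ∈ T, ‖h i‖ ^ p + (1 - ω) * ∑ i ∈ S, ‖h i‖ ^ p ≤
      γ * (k:ℝ) ^ (1 - p/2) * R := by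
    have h1 : ∑ i ∈ T, ‖h i‖ ^ p ≤ (k:ℝ) ^ (1 - p/2) * R :=
      le_trans hTtop (hcardbound k hk hkk)
    have h2 : ∑ i ∈ S, ‖h i‖ ^ p ≤ (s:ℝ) ^ (1 - p/2) * R :=
      le_trans hStop (hcardbound s hs hsk)
    have hγk : γ * (k:ℝ) ^ (1 - p/2) = ω * (k:ℝ) ^ (1 - p/2) + (1-ω) * (s:ℝ) ^ (1 - p/2) := by
      have hdk : ((s:ℝ)/(k:ℝ)) ^ (1 - p/2) * (k:ℝ) ^ (1 - p/2) = (s:ℝ) ^ (1 - p/2) := by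
        rw [Real.div_rpow hspos.le hkpos.le]
        field_simp
      rw [hγ, add_mul, mul_assoc, hdk]
    have e1 : ω * ∑ i ∈ T, ‖h i‖ ^ p ≤ ω * ((k:ℝ) ^ (1 - p/2) * R) :=
      mul_le_mul_of_nonneg_left h1 hω0
    have e2 : (1-ω) * ∑ i ∈ S, ‖h i‖ ^ p ≤ (1-ω) * ((s:ℝ) ^ (1 - p/2) * R) :=
      mul_le_mul_of_nonneg_left h2 (by linarith)
    calc ω * ∑ i ∈ T, ‖h i‖ ^ p + (1 - ω) * ∑ i ∈ S, ‖h i‖ ^ p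
        ≤ ω * ((k:ℝ) ^ (1 - p/2) * R) + (1-ω) * ((s:ℝ) ^ (1 - p/2) * R) := add_le_add e1 e2
      _ = (ω * (k:ℝ) ^ (1 - p/2) + (1-ω) * (s:ℝ) ^ (1 - p/2)) * R := by ring
      _ = γ * (k:ℝ) ^ (1 - p/2) * R := by rw [hγk]
  -- final combination
  have hGkcomp : ∑ i ∈ (G k)ᶜ, ‖h i‖ ^ p ≤ ∑ i ∈ Tᶜ, ‖h i‖ ^ p := by
    have ha1 := Finset.sum_add_sum_compl (G k) (fun i => ‖h i‖ ^ p)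
    have ha2 := Finset.sum_add_sum_compl T (fun i => ‖h i‖ ^ p)
    linarith
  have hR2 : R ≤ (1 + δak) / (1 - δa1k) * (((a*k : ℕ) : ℝ) ^ (p/2 - 1) *
      ∑ i ∈ (G k)ᶜ, ‖h i‖ ^ p) := by
    rw [div_mul_eq_mul_div, le_div_iff₀ hδ1]
    calc R * (1 - δa1k) = (1 - δa1k) * R := by ring
      _ ≤ (1 + δak) * (((a*k : ℕ) : ℝ) ^ (p/2 - 1) * ∑ i ∈ (G k)ᶜ, ‖h i‖ ^ p) := hstar
      _ = (1 + δak) * (((a*k : ℕ) : ℝ) ^ (p/2 - 1) * ∑ i ∈ (G k)ᶜ, ‖h i‖ ^ p) := rfl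
  have hident : γ * (k:ℝ) ^ (1 - p/2) * ((1 + δak) / (1 - δa1k) * (((a*k : ℕ) : ℝ) ^ (p/2 - 1))) =
      (a : ℝ) ^ (p / 2 - 1) * γ * (1 + δak) / (1 - δa1k) := by
    have hmul : ((a*k : ℕ) : ℝ) ^ (p/2 - 1) = (a:ℝ) ^ (p/2-1) * (k:ℝ) ^ (p/2-1) := by
      push_cast
      rw [Real.mul_rpow hapos.le hkpos.le]
    have hkk1 : (k:ℝ) ^ (1 - p/2) * (k:ℝ) ^ (p/2 - 1) = 1 := by
      rw [← Real.rpow_add hkpos]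
      norm_num
    rw [hmul]
    calc γ * (k:ℝ) ^ (1 - p/2) * ((1 + δak) / (1 - δa1k) *
          ((a:ℝ) ^ (p/2-1) * (k:ℝ) ^ (p/2-1)))
        = ((k:ℝ) ^ (1 - p/2) * (k:ℝ) ^ (p/2-1)) *
          ((a:ℝ) ^ (p/2-1) * γ * (1 + δak) / (1 - δa1k)) := by ring
      _ = (a : ℝ) ^ (p / 2 - 1) * γ * (1 + δak) / (1 - δa1k) := by rw [hkk1, one_mul]
  calc ω * ∑ i ∈ T, ‖h i‖ ^ p + (1 - ω) * ∑ i ∈ S, ‖h i‖ ^ p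
      ≤ γ * (k:ℝ) ^ (1 - p/2) * R := hLHS
    _ ≤ γ * (k:ℝ) ^ (1 - p/2) * ((1 + δak) / (1 - δa1k) * (((a*k : ℕ) : ℝ) ^ (p/2 - 1) *
        ∑ i ∈ (G k)ᶜ, ‖h i‖ ^ p)) := by
        apply mul_le_mul_of_nonneg_left hR2
        positivity
    _ = γ * (k:ℝ) ^ (1 - p/2) * ((1 + δak) / (1 - δa1k) * (((a*k : ℕ) : ℝ) ^ (p/2 - 1))) *
        ∑ i ∈ (G k)ᶜ, ‖h i‖ ^ p := by ring
    _ = ((a : ℝ) ^ (p / 2 - 1) * γ * (1 + δak) / (1 - δa1k)) * ∑ i ∈ (G k)ᶜ, ‖h i‖ ^ p := by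
        rw [hident]
    _ ≤ ((a : ℝ) ^ (p / 2 - 1) * γ * (1 + δak) / (1 - δa1k)) * ∑ i ∈ Tᶜ, ‖h i‖ ^ p :=
        mul_le_mul_of_nonneg_left hGkcomp hCpos.le
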